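/- Let G and G' be finite simple graphs, let v be a vertex of G and v' a vertex of G', and let r be a natural number. Let B_r(v) denote the subgraph of G induced on the set of vertices joined to v by a path of length at most r, with m its number of edges, and define B_r(v') ⊆ G' and m' analogously. If for every l with 1 ≤ l ≤ 2(max(m, m') + 1) the set of anonymous walks of walks of length l in G starting at v equals the set of anonymous walks of walks of length l in G' starting at v', then there exists a graph isomorphism from B_r(v) onto B_r(v') mapping v to v'. -/

import Mathlib

/-- The first index at which the value `g i` occurs in `g`. -/
def firstOcc {n : ℕ} {α : Type*} [DecidableEq α] (g : Fin n → α) (i : Fin n) : Fin n :=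
  (Finset.univ.filter fun j => g j = g i).min' ⟨i, by simp⟩

/-- The anonymization of `g` at `i`: the number of distinct values of `g` occurring
strictly before the first occurrence of `g i`. -/
def anonymize {n : ℕ} {α : Type*} [DecidableEq α] (g : Fin n → α) (i : Fin n) : ℕ :=
  ((Finset.univ.filter fun j => j < firstOcc g i).image g).card

/-- The set of vertices joined to `v` by a path (equivalently, a walk) of length at most `r`. -/
def ball {V : Type*} (G : SimpleGraph V) (v : V) (r : ℕ) : Set V :=
  {u | ∃ w : G.Walk v u, w.length ≤ r}

/-- The set of anonymous walks of walks of length `l` in `G` starting at `v`. -/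
def AWset {V : Type*} [DecidableEq V] (G : SimpleGraph V) (v : V) (l : ℕ) :
    Set (Fin (l + 1) → ℕ) :=
  {a | ∃ w : Fin (l + 1) → V, w 0 = v ∧ (∀ i : Fin l, G.Adj (w i.castSucc) (w i.succ)) ∧
    ∀ i, a i = anonymize w i}

section Anon

variable {n : ℕ} {α : Type*} [DecidableEq α] {g : Fin n → α}

lemma firstOcc_mem (g : Fin n → α) (i : Fin n) :
    firstOcc g i ∈ Finset.univ.filter fun j => g j = g i :=
  Finset.min'_mem _ _

lemma firstOcc_apply (g : Fin n → α) (i : Fin n) : g (firstOcc g i) = g i :=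
  (Finset.mem_filter.mp (firstOcc_mem g i)).2

lemma firstOcc_min {i j : Fin n} (hj : g j = g i) : firstOcc g i ≤ j :=
  Finset.min'_le _ _ (by simp [hj])

lemma firstOcc_congr {i j : Fin n} (h : g i = g j) : firstOcc g i = firstOcc g j := by
  unfold firstOcc
  congr 1
  ext k
  simp [h]

lemma anonymize_lt {i j : Fin n} (h : firstOcc g i < firstOcc g j) :
    anonymize g i < anonymize g j := by
  apply Finset.card_lt_card
  constructor
  · apply Finset.image_subset_image
    intro k hk
    simp only [Finset.mem_filter, Finset.mem_univ, true_and] at hk ⊢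
    exact hk.trans h
  · intro hsub
    have hmem : g (firstOcc g i) ∈
        (Finset.univ.filter fun k => k < firstOcc g j).image g :=
      Finset.mem_image.mpr ⟨firstOcc g i, by simpa using h, rfl⟩
    obtain ⟨k, hk, hgk⟩ := Finset.mem_image.mp (hsub hmem)
    simp only [Finset.mem_filter, Finset.mem_univ, true_and] at hk
    have : firstOcc g i ≤ k := firstOcc_min (by rw [hgk]; exact firstOcc_apply g i)
    exact absurd hk (not_lt.mpr this)

lemma anonymize_eq_iff {i j : Fin n} : anonymize g i = anonymize g j ↔ g i = g j := by
  constructor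
  · intro h
    rcases lt_trichotomy (firstOcc g i) (firstOcc g j) with hl | he | hl
    · exact absurd h (anonymize_lt hl).ne
    · calc g i = g (firstOcc g i) := (firstOcc_apply g i).symm
        _ = g (firstOcc g j) := by rw [he]
        _ = g j := firstOcc_apply g j
    · exact absurd h.symm (anonymize_lt hl).ne
  · intro h
    unfold anonymize
    rw [firstOcc_congr h]

end Anon

section WalkLemmas

variable {V : Type*} {G : SimpleGraph V}

lemma edges_getVert {u v : V} (w : G.Walk u v) :
    ∀ e ∈ w.edges, ∃ i, i < w.length ∧ e = s(w.getVert i, w.getVert (i + 1)) := by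
  induction w with
  | nil => simp
  | cons h p ih =>
    intro e he
    rw [SimpleGraph.Walk.edges_cons, List.mem_cons] at he
    rcases he with rfl | he
    · exact ⟨0, by simp, by
        simp [SimpleGraph.Walk.getVert_cons_succ, SimpleGraph.Walk.getVert_zero]⟩
    · obtain ⟨i, hi, hei⟩ := ih e he
      refine ⟨i + 1, by simp only [SimpleGraph.Walk.length_cons]; omega, ?_⟩
      simpa [SimpleGraph.Walk.getVert_cons_succ] using hei

lemma support_subset_ball [DecidableEq V] {v u : V} {r : ℕ} (w : G.Walk v u)
    (hw : w.length ≤ r) : ∀ x ∈ w.support, x ∈ ball G v r := fun x hx =>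
  ⟨w.takeUntil x hx, le_trans (w.length_takeUntil_le hx) hw⟩

lemma reachable_induce_of_walk {s : Set V} :
    ∀ {a b : V} (p : G.Walk a b), (∀ x ∈ p.support, x ∈ s) →
      ∀ (ha : a ∈ s) (hb : b ∈ s), (G.induce s).Reachable ⟨a, ha⟩ ⟨b, hb⟩ := by
  intro a b p
  induction p with
  | nil => intro _ ha hb; rfl
  | @cons a c b h p ih =>
    intro hp ha hb
    have hc : c ∈ s := hp c (by simp)
    have hadj : (G.induce s).Adj ⟨a, ha⟩ ⟨c, hc⟩ := by
      simpa using h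
    exact hadj.reachable.trans
      (ih (fun x hx => hp x (by simp [hx])) hc hb)

/-- A closed walk covering all traversed-edge pairs of a connected graph of length `≤ 2m`. -/
lemma exists_cover_walk {W : Type*} [Fintype W] [DecidableEq W] (H : SimpleGraph W) (x : W)
    (hR : ∀ y, H.Reachable x y) :
    ∃ w : H.Walk x x, w.length ≤ 2 * Nat.card H.edgeSet ∧ ∀ e ∈ H.edgeSet, e ∈ w.edges := by
  classical
  set key : Sym2 W → ℕ :=
    Sym2.lift ⟨fun a b => min (H.dist x a) (H.dist x b), fun a b => min_comm _ _⟩ with hkeydef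
  have hkey : ∀ a b : W, key s(a, b) = min (H.dist x a) (H.dist x b) := fun a b => rfl
  have main : ∀ (k : ℕ) (s : Finset (Sym2 W)), (↑s ⊆ H.edgeSet) →
      (∀ e ∈ s, ∀ f ∈ H.edgeSet, key f < key e → f ∈ s) → s.card = k →
      ∃ w : H.Walk x x, w.length ≤ 2 * k ∧ ∀ e ∈ s, e ∈ w.edges := by
    intro k
    induction k with
    | zero =>
      intro s _ _ hcard
      exact ⟨SimpleGraph.Walk.nil, by simp, by simp [Finset.card_eq_zero.mp hcard]⟩
    | succ k ih =>
      intro s hsub hdc hcard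
      have hne : s.Nonempty := by rw [← Finset.card_pos, hcard]; omega
      obtain ⟨e, hes, hemax⟩ := Finset.exists_max_image s key hne
      set s' := s.erase e with hs'def
      have hcard' : s'.card = k := by rw [hs'def, Finset.card_erase_of_mem hes, hcard]; omega
      have hsub' : ↑s' ⊆ H.edgeSet := fun f hf => hsub (Finset.erase_subset _ _ hf)
      have hdc' : ∀ g ∈ s', ∀ f ∈ H.edgeSet, key f < key g → f ∈ s' := by
        intro g hg f hf hlt
        have hgs : g ∈ s := Finset.erase_subset _ _ hg
        refine Finset.mem_erase.mpr ⟨fun hfe => ?_, hdc g hgs f hf hlt⟩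
        rw [hfe] at hlt
        exact absurd hlt (not_lt.mpr (hemax g hgs))
      obtain ⟨w, hwl, hwcov⟩ := ih s' hsub' hdc' hcard'
      have heE : e ∈ H.edgeSet := hsub hes
      have step : ∀ a b (hab : H.Adj a b), H.dist x a ≤ H.dist x b → s(a, b) = e →
          ∃ w2 : H.Walk x x, w2.length ≤ 2 * (k + 1) ∧ ∀ e' ∈ s, e' ∈ w2.edges := by
        intro a b hab hd heq
        have ha : a ∈ w.support := by
          rcases Nat.eq_zero_or_pos (H.dist x a) with h0 | hpos
          · have hax : x = a := (hR a).dist_eq_zero_iff.mp h0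
            rw [← hax]; exact w.start_mem_support
          · obtain ⟨p, hp⟩ := (hR a).exists_walk_length_eq_dist
            have hxa : a ≠ x := by
              rintro rfl
              simp [SimpleGraph.dist_self] at hpos
            obtain ⟨c, hac, q, hq⟩ := SimpleGraph.Walk.exists_eq_cons_of_ne hxa p.reverse
            have hqlen : q.length = H.dist x a - 1 := by
              have := congrArg SimpleGraph.Walk.length hq
              rw [SimpleGraph.Walk.length_reverse, hp] at this
              simp only [SimpleGraph.Walk.length_cons] at this
              omega
            have hdistc : H.dist x c ≤ H.dist x a - 1 := by
              have := SimpleGraph.dist_le q.reverse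
              rwa [SimpleGraph.Walk.length_reverse, hqlen] at this
            have hfE : s(a, c) ∈ H.edgeSet := hac
            have hkeyf : key s(a, c) < key e := by
              rw [← heq, hkey, hkey]
              have h1 : min (H.dist x a) (H.dist x b) = H.dist x a := min_eq_left hd
              rw [h1]
              calc min (H.dist x a) (H.dist x c) ≤ H.dist x c := min_le_right _ _
                _ ≤ H.dist x a - 1 := hdistc
                _ < H.dist x a := by omega
            have hfs : s(a, c) ∈ s := hdc e hes _ hfE hkeyf
            have hfs' : s(a, c) ∈ s' := Finset.mem_erase.mpr
              ⟨fun hfe => by rw [hfe] at hkeyf; exact lt_irrefl _ hkeyf, hfs⟩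
            exact w.fst_mem_support_of_mem_edges (hwcov _ hfs')
        refine ⟨(w.takeUntil a ha).append
          (SimpleGraph.Walk.cons hab (SimpleGraph.Walk.cons hab.symm (w.dropUntil a ha))), ?_, ?_⟩
        · have hlen : (w.takeUntil a ha).length + (w.dropUntil a ha).length = w.length := by
            have := congrArg SimpleGraph.Walk.length (w.take_spec ha)
            rwa [SimpleGraph.Walk.length_append] at this
          rw [SimpleGraph.Walk.length_append]
          simp only [SimpleGraph.Walk.length_cons]
          omega
        · intro e' he'
          have hedges : w.edges = (w.takeUntil a ha).edges ++ (w.dropUntil a ha).edges := by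
            have := congrArg SimpleGraph.Walk.edges (w.take_spec ha)
            rw [SimpleGraph.Walk.edges_append] at this
            exact this.symm
          rw [SimpleGraph.Walk.edges_append, SimpleGraph.Walk.edges_cons,
            SimpleGraph.Walk.edges_cons]
          by_cases he'e : e' = e
          · subst he'e
            rw [← heq]
            simp
          · have : e' ∈ w.edges := hwcov e' (Finset.mem_erase.mpr ⟨he'e, he'⟩)
            rw [hedges, List.mem_append] at this
            rcases this with h1 | h1
            · exact List.mem_append.mpr (Or.inl h1)
            · exact List.mem_append.mpr (Or.inr (by simp [h1]))
      have hdecomp : ∃ a b, H.Adj a b ∧ s(a, b) = e := by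
        revert heE
        refine Sym2.inductionOn e ?_
        intro a b hab
        exact ⟨a, b, hab, rfl⟩
      obtain ⟨a, b, hab, heq⟩ := hdecomp
      rcases le_total (H.dist x a) (H.dist x b) with hd | hd
      · exact step a b hab hd heq
      · exact step b a hab.symm hd ((Sym2.eq_swap).trans heq)
  have hfin : H.edgeSet.Finite := Set.toFinite _
  have hcardeq : Nat.card H.edgeSet = hfin.toFinset.card := by
    rw [Nat.card_coe_set_eq, Set.ncard_eq_toFinset_card _ hfin]
  obtain ⟨w, hl, hcov⟩ := main hfin.toFinset.card hfin.toFinset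
    (fun e he => hfin.mem_toFinset.mp he)
    (fun e _ f hf _ => hfin.mem_toFinset.mpr hf) rfl
  exact ⟨w, by rw [hcardeq]; exact hl, fun e he => hcov e (hfin.mem_toFinset.mpr he)⟩

lemma push_walk {V' : Type*} {G' : SimpleGraph V'} (s : Set V) (φ : V → V')
    (hadj : ∀ x ∈ s, ∀ y ∈ s, G.Adj x y → G'.Adj (φ x) (φ y)) :
    ∀ {a b : V} (p : G.Walk a b), (∀ x ∈ p.support, x ∈ s) →
      ∃ q : G'.Walk (φ a) (φ b), q.length = p.length := by
  intro a b p
  induction p with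
  | nil => exact fun _ => ⟨SimpleGraph.Walk.nil, rfl⟩
  | @cons a c b h p ih =>
    intro hp
    have ha : a ∈ s := hp a (by simp)
    have hc : c ∈ s := hp c (by simp)
    obtain ⟨q, hq⟩ := ih (fun x hx => hp x (by simp [hx]))
    exact ⟨SimpleGraph.Walk.cons (hadj a ha c hc h) q, by simp [hq]⟩

end WalkLemmas

section Ball

variable {V : Type*} {G : SimpleGraph V} {v : V} {r : ℕ}

lemma self_mem_ball : v ∈ ball G v r := ⟨SimpleGraph.Walk.nil, Nat.zero_le r⟩

/-- Every vertex in the ball distinct from the center is incident to an edge of the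
induced ball graph. -/
lemma exists_ball_adj [DecidableEq V] {u : V} (hu : u ∈ ball G v r) (hne : u ≠ v) :
    ∃ z : V, ∃ hz : z ∈ ball G v r,
      (SimpleGraph.induce (ball G v r) G).Adj ⟨u, hu⟩ ⟨z, hz⟩ := by
  obtain ⟨w, hw⟩ := hu
  have hsupp := support_subset_ball w hw
  have hne' : u ≠ v := hne
  obtain ⟨c, huc, q, hq⟩ := SimpleGraph.Walk.exists_eq_cons_of_ne hne' w.reverse
  have hc : c ∈ ball G v r := by
    apply hsupp
    have : c ∈ w.reverse.support := by rw [hq]; simp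
    rwa [SimpleGraph.Walk.support_reverse, List.mem_reverse] at this
  exact ⟨c, hc, by simpa using huc⟩

end Ball

section MainLemma

variable {V V' : Type*} [Fintype V] [Fintype V'] [DecidableEq V] [DecidableEq V']

/-- One direction: an injective, root- and adjacency-preserving map between balls. -/
lemma exists_ball_embed (G : SimpleGraph V) (G' : SimpleGraph V') (v : V) (v' : V') (r : ℕ)
    (h : ∀ l : ℕ, 1 ≤ l →
      l ≤ 2 * (max (Nat.card (SimpleGraph.induce (ball G v r) G).edgeSet)
                   (Nat.card (SimpleGraph.induce (ball G' v' r) G').edgeSet) + 1) →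
      AWset G v l = AWset G' v' l) :
    ∃ φ : V → V', φ v = v' ∧ Set.InjOn φ (ball G v r) ∧
      (∀ x ∈ ball G v r, φ x ∈ ball G' v' r) ∧
      (∀ x ∈ ball G v r, ∀ y ∈ ball G v r, G.Adj x y → G'.Adj (φ x) (φ y)) := by
  classical
  by_cases htriv : ∀ u ∈ ball G v r, u = v
  · refine ⟨fun _ => v', rfl, ?_, ?_, ?_⟩
    · intro x hx y hy _
      rw [htriv x hx, htriv y hy]
    · intro x _
      exact ⟨SimpleGraph.Walk.nil, Nat.zero_le r⟩
    · intro x hx y hy hxy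
      rw [htriv x hx, htriv y hy] at hxy
      exact absurd hxy (G.irrefl)
  push_neg at htriv
  obtain ⟨u0, hu0, hu0ne⟩ := htriv
  set B := SimpleGraph.induce (ball G v r) G with hBdef
  have hvball : v ∈ ball G v r := self_mem_ball
  -- reachability inside the ball
  have hreach : ∀ y : ball G v r, B.Reachable ⟨v, hvball⟩ y := by
    rintro ⟨y, hy⟩
    obtain ⟨w, hw⟩ := hy
    exact reachable_induce_of_walk w (support_subset_ball w hw) hvball ⟨w, hw⟩
  obtain ⟨w₀, hw₀len, hw₀cov⟩ := exists_cover_walk B ⟨v, hvball⟩ hreach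
  -- the covering walk has positive length
  obtain ⟨z0, hz0, hadj0⟩ := exists_ball_adj hu0 hu0ne
  have hedge0 : s((⟨u0, hu0⟩ : ball G v r), (⟨z0, hz0⟩ : ball G v r)) ∈ B.edgeSet := hadj0
  have hlenpos : 1 ≤ w₀.length := by
    by_contra hcon
    have : w₀.length = 0 := by omega
    have hnil : w₀.edges = [] := by
      have := SimpleGraph.Walk.eq_of_length_eq_zero this
      cases w₀ with
      | nil => rfl
      | cons h p => simp at this
    have := hw₀cov _ hedge0
    rw [hnil] at this
    simp at this
  set l₀ := w₀.length with hl₀def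
  -- the walk as a function
  set wf : Fin (l₀ + 1) → V := fun i => (w₀.getVert i).val with hwfdef
  have hwf0 : wf 0 = v := by
    simp [hwfdef]
  have hwfadj : ∀ i : Fin l₀, G.Adj (wf i.castSucc) (wf i.succ) := by
    intro i
    have := w₀.adj_getVert_succ (i := i.val) (by exact i.isLt)
    simp only [hwfdef, Fin.coe_castSucc, Fin.val_succ]
    exact this
  -- anonymous walk membership transfer
  have hAW : (fun i => anonymize wf i) ∈ AWset G v l₀ := ⟨wf, hwf0, hwfadj, fun _ => rfl⟩
  have hbound : l₀ ≤ 2 * (max (Nat.card (SimpleGraph.induce (ball G v r) G).edgeSet)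
      (Nat.card (SimpleGraph.induce (ball G' v' r) G').edgeSet) + 1) := by
    calc l₀ ≤ 2 * Nat.card B.edgeSet := hw₀len
      _ ≤ 2 * (max (Nat.card (SimpleGraph.induce (ball G v r) G).edgeSet)
          (Nat.card (SimpleGraph.induce (ball G' v' r) G').edgeSet) + 1) := by
        rw [hBdef]
        have := le_max_left (Nat.card (SimpleGraph.induce (ball G v r) G).edgeSet)
          (Nat.card (SimpleGraph.induce (ball G' v' r) G').edgeSet)
        omega
  rw [h l₀ hlenpos hbound] at hAW
  obtain ⟨wf', hwf'0, hwf'adj, hwf'a⟩ := hAW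
  have hanon : ∀ i, anonymize wf i = anonymize wf' i := fun i => hwf'a i
  have hsame : ∀ i j, wf i = wf j ↔ wf' i = wf' j := by
    intro i j
    rw [← anonymize_eq_iff (g := wf), ← anonymize_eq_iff (g := wf'), hanon i, hanon j]
  -- definition of φ
  set φ : V → V' := fun x => if hx : ∃ i, wf i = x then wf' hx.choose else v' with hφdef
  have hφeq : ∀ i, φ (wf i) = wf' i := by
    intro i
    have hex : ∃ j, wf j = wf i := ⟨i, rfl⟩
    simp only [hφdef, dif_pos hex]
    exact (hsame hex.choose i).mp hex.choose_spec
  -- every ball vertex is a value of wf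
  have hballwf : ∀ x ∈ ball G v r, ∃ i, wf i = x := by
    intro x hx
    by_cases hxv : x = v
    · exact ⟨0, by rw [hwf0, hxv]⟩
    · obtain ⟨z, hz, hadj⟩ := exists_ball_adj hx hxv
      have hedge : s((⟨x, hx⟩ : ball G v r), (⟨z, hz⟩ : ball G v r)) ∈ B.edgeSet := hadj
      have hmem : (⟨x, hx⟩ : ball G v r) ∈ w₀.support :=
        w₀.fst_mem_support_of_mem_edges (hw₀cov _ hedge)
      obtain ⟨i, hgi, hile⟩ := SimpleGraph.Walk.mem_support_iff_exists_getVert.mp hmem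
      refine ⟨⟨i, by omega⟩, ?_⟩
      simp only [hwfdef]
      rw [hgi]
  have hφv : φ v = v' := by
    have := hφeq 0
    rw [hwf0, hwf'0] at this
    exact this
  have hinj : Set.InjOn φ (ball G v r) := by
    intro x hx y hy hxy
    obtain ⟨i, rfl⟩ := hballwf x hx
    obtain ⟨j, rfl⟩ := hballwf y hy
    rw [hφeq i, hφeq j] at hxy
    exact (hsame i j).mpr hxy
  have hadjpres : ∀ x ∈ ball G v r, ∀ y ∈ ball G v r, G.Adj x y → G'.Adj (φ x) (φ y) := by
    intro x hx y hy hxy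
    have hedge : s((⟨x, hx⟩ : ball G v r), (⟨y, hy⟩ : ball G v r)) ∈ B.edgeSet := by
      exact hxy
    obtain ⟨i, hi, hei⟩ := edges_getVert w₀ _ (hw₀cov _ hedge)
    rw [Sym2.eq_iff] at hei
    have hstep : G'.Adj (wf' ⟨i, by omega⟩) (wf' ⟨i + 1, by omega⟩) := by
      have := hwf'adj ⟨i, by omega⟩
      simpa [Fin.castSucc, Fin.succ] using this
    rcases hei with ⟨h1, h2⟩ | ⟨h1, h2⟩
    · have hx' : wf ⟨i, by omega⟩ = x := by
        simp only [hwfdef]; rw [← h1]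
      have hy' : wf ⟨i + 1, by omega⟩ = y := by
        simp only [hwfdef]; rw [← h2]
      rw [← hx', ← hy', hφeq, hφeq]
      exact hstep
    · have hx' : wf ⟨i + 1, by omega⟩ = x := by
        simp only [hwfdef]; rw [← h1]
      have hy' : wf ⟨i, by omega⟩ = y := by
        simp only [hwfdef]; rw [← h2]
      rw [← hx', ← hy', hφeq, hφeq]
      exact hstep.symm
  refine ⟨φ, hφv, hinj, ?_, hadjpres⟩
  intro x hx
  obtain ⟨p, hp⟩ := hx
  obtain ⟨q, hq⟩ := push_walk (ball G v r) φ hadjpres p (support_subset_ball p hp)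
  exact ⟨q.copy hφv rfl, by rw [SimpleGraph.Walk.length_copy, hq]; exact hp⟩

end MainLemma

/-- If two finite rooted graphs `(G, v)` and `(G', v')` have the same sets of anonymous walks
of every length `l` with `1 ≤ l ≤ 2(max(m, m') + 1)`, where `m` (resp. `m'`) is the number of
edges of the ball `B_r(v)` (resp. `B_r(v')`), then `B_r(v)` and `B_r(v')` are isomorphic via
an isomorphism mapping `v` to `v'`. -/
theorem aw_reconstruct_ball {V V' : Type*} [Fintype V] [Fintype V']
    [DecidableEq V] [DecidableEq V']
    (G : SimpleGraph V) (G' : SimpleGraph V') (v : V) (v' : V') (r : ℕ)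
    (h : ∀ l : ℕ, 1 ≤ l →
      l ≤ 2 * (max (Nat.card (SimpleGraph.induce (ball G v r) G).edgeSet)
                   (Nat.card (SimpleGraph.induce (ball G' v' r) G').edgeSet) + 1) →
      AWset G v l = AWset G' v' l) :
    ∃ σ : SimpleGraph.induce (ball G v r) G ≃g SimpleGraph.induce (ball G' v' r) G',
      (σ ⟨v, ⟨SimpleGraph.Walk.nil, Nat.zero_le r⟩⟩ : V') = v' := by
  classical
  obtain ⟨φ, hφv, hφinj, hφball, hφadj⟩ := exists_ball_embed G G' v v' r h
  have h' : ∀ l : ℕ, 1 ≤ l →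
      l ≤ 2 * (max (Nat.card (SimpleGraph.induce (ball G' v' r) G').edgeSet)
                   (Nat.card (SimpleGraph.induce (ball G v r) G).edgeSet) + 1) →
      AWset G' v' l = AWset G v l := by
    intro l h1 h2
    rw [max_comm] at h2
    exact (h l h1 h2).symm
  obtain ⟨ψ, hψv, hψinj, hψball, hψadj⟩ := exists_ball_embed G' G v' v r h'
  set B := SimpleGraph.induce (ball G v r) G with hBdef
  set B' := SimpleGraph.induce (ball G' v' r) G' with hB'def
  set F : ball G v r → ball G' v' r := fun x => ⟨φ x.val, hφball x.val x.property⟩ with hFdef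
  set K : ball G' v' r → ball G v r := fun x => ⟨ψ x.val, hψball x.val x.property⟩ with hKdef
  have hFinj : Function.Injective F := by
    intro a b hab
    exact Subtype.ext (hφinj a.property b.property (congrArg Subtype.val hab))
  have hKinj : Function.Injective K := by
    intro a b hab
    exact Subtype.ext (hψinj a.property b.property (congrArg Subtype.val hab))
  have hcard : Nat.card (ball G v r) = Nat.card (ball G' v' r) :=
    le_antisymm (Nat.card_le_card_of_injective F hFinj)
      (Nat.card_le_card_of_injective K hKinj)
  have hFbij : Function.Bijective F :=
    (Nat.bijective_iff_injective_and_card F).mpr ⟨hFinj, hcard⟩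
  -- edge maps
  have hFedge : ∀ e ∈ B.edgeSet, Sym2.map F e ∈ B'.edgeSet := by
    intro e
    refine Sym2.inductionOn e ?_
    intro a b hab
    simp only [Sym2.map_pair_eq]
    exact hφadj a.val a.property b.val b.property hab
  have hKedge : ∀ e ∈ B'.edgeSet, Sym2.map K e ∈ B.edgeSet := by
    intro e
    refine Sym2.inductionOn e ?_
    intro a b hab
    simp only [Sym2.map_pair_eq]
    exact hψadj a.val a.property b.val b.property hab
  set EF : B.edgeSet → B'.edgeSet := fun e => ⟨Sym2.map F e.val, hFedge e.val e.property⟩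
  set EK : B'.edgeSet → B.edgeSet := fun e => ⟨Sym2.map K e.val, hKedge e.val e.property⟩
  have hEFinj : Function.Injective EF := by
    intro a b hab
    exact Subtype.ext (Sym2.map.injective hFinj (congrArg Subtype.val hab))
  have hEKinj : Function.Injective EK := by
    intro a b hab
    exact Subtype.ext (Sym2.map.injective hKinj (congrArg Subtype.val hab))
  have hecard : Nat.card B.edgeSet = Nat.card B'.edgeSet :=
    le_antisymm (Nat.card_le_card_of_injective EF hEFinj)
      (Nat.card_le_card_of_injective EK hEKinj)
  have hEFbij : Function.Bijective EF :=
    (Nat.bijective_iff_injective_and_card EF).mpr ⟨hEFinj, hecard⟩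
  -- reverse adjacency
  have hrev : ∀ a b : ball G v r, B'.Adj (F a) (F b) → B.Adj a b := by
    intro a b hab
    have hmem : (s(F a, F b) : Sym2 (ball G' v' r)) ∈ B'.edgeSet := hab
    obtain ⟨⟨e, he⟩, heq⟩ := hEFbij.surjective ⟨_, hmem⟩
    have heq' : Sym2.map F e = s(F a, F b) := congrArg Subtype.val heq
    clear heq
    revert he heq'
    refine Sym2.inductionOn e ?_
    intro c d hcd hmapeq
    rw [Sym2.map_pair_eq, Sym2.eq_iff] at hmapeq
    rcases hmapeq with ⟨h1, h2⟩ | ⟨h1, h2⟩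
    · rwa [hFinj h1, hFinj h2] at hcd
    · exact (hFinj h2 ▸ hFinj h1 ▸ hcd).symm
  refine ⟨⟨Equiv.ofBijective F hFbij, ?_⟩, ?_⟩
  · intro a b
    constructor
    · exact hrev a b
    · intro hab
      exact hφadj a.val a.property b.val b.property hab
  · show (F ⟨v, _⟩).val = v'
    simpa [hFdef] using hφv
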